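/- Let F : [0,1]² → ℝ be continuous with F(1/2,1/2) = ‖F‖_{L∞([0,1]²)}, and let w solve the Dirichlet problem (5). Then F(1/2,1/2) − π² w(1/2,1/2) ≥ ‖F‖_{L∞([0,1]²)} / cosh(π/2). -/

import Mathlib

open Real Set

noncomputable section

/-- The closed unit square `[0,1]²`. -/
def unitSq : Set (ℝ × ℝ) := Icc 0 1 ×ˢ Icc 0 1

/-- The open unit square `(0,1)²`. -/
def unitOSq : Set (ℝ × ℝ) := Ioo 0 1 ×ˢ Ioo 0 1

/-- The `L∞([0,1]²)` norm of `F`. -/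
def supNorm (F : ℝ × ℝ → ℝ) : ℝ := sSup ((fun p => |F p|) '' unitSq)

/-- Pure second partial derivative `∂_x² w` at `p`. -/
def pdx2 (w : ℝ × ℝ → ℝ) (p : ℝ × ℝ) : ℝ := deriv (deriv (fun x => w (x, p.2))) p.1

/-- Pure second partial derivative `∂_y² w` at `p`. -/
def pdy2 (w : ℝ × ℝ → ℝ) (p : ℝ × ℝ) : ℝ := deriv (deriv (fun y => w (p.1, y))) p.2

/-- `p` lies on the boundary of the unit square. -/
def OnBdry (p : ℝ × ℝ) : Prop := p.1 = 0 ∨ p.1 = 1 ∨ p.2 = 0 ∨ p.2 = 1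

/-- `w` solves the Dirichlet problem (5): `-Δw + π² w = F` in `(0,1)²`, `w = 0` on the
boundary, with `w` continuous on `[0,1]²` and twice continuously differentiable inside. -/
def SolvesP5 (F w : ℝ × ℝ → ℝ) : Prop :=
  ContinuousOn w unitSq ∧ ContDiffOn ℝ 2 w unitOSq ∧
    (∀ p ∈ unitOSq, -(pdx2 w p + pdy2 w p) + π ^ 2 * w p = F p) ∧
    (∀ p ∈ unitSq, OnBdry p → w p = 0)

/-- The weights `γ_{ij}`: `2/3` if `i = j = N/2`, and `1` otherwise. -/
def gam (N i j : ℕ) : ℝ := if i = N / 2 ∧ j = N / 2 then 2 / 3 else 1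

/-- Second difference in `x` on the grid of step `h = 1/N`. -/
def dx2 (N : ℕ) (V : ℕ → ℕ → ℝ) (i j : ℕ) : ℝ :=
  (V (i + 1) j - 2 * V i j + V (i - 1) j) / ((N : ℝ)⁻¹ ^ 2)

/-- Second difference in `y` on the grid of step `h = 1/N`. -/
def dy2 (N : ℕ) (V : ℕ → ℕ → ℝ) (i j : ℕ) : ℝ :=
  (V i (j + 1) - 2 * V i j + V i (j - 1)) / ((N : ℝ)⁻¹ ^ 2)

/-- `W` solves the two-dimensional scheme (7). -/
def Scheme2d (N : ℕ) (F : ℝ × ℝ → ℝ) (W : ℕ → ℕ → ℝ) : Prop :=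
  (∀ i j, 0 < i → i < N → 0 < j → j < N →
    -(dx2 N W i j + dy2 N W i j) + gam N i j * π ^ 2 * W i j
      = gam N i j * F ((i : ℝ) / N, (j : ℝ) / N)) ∧
  (∀ i j, i ≤ N → j ≤ N → (i = 0 ∨ i = N ∨ j = 0 ∨ j = N) → W i j = 0)

/-- Regularity: third-order smoothness up to the boundary of the square and pure
fourth-order partial derivatives in `x` and `y` existing inside, with
`|∂_x⁴ w| + |∂_y⁴ w| ≤ M` there. -/
def Reg4 (w : ℝ × ℝ → ℝ) (M : ℝ) : Prop :=
  ContDiffOn ℝ 3 w unitSq ∧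
    ∀ p ∈ unitOSq,
      (∀ k < 4, DifferentiableAt ℝ (deriv^[k] fun x => w (x, p.2)) p.1) ∧
      (∀ k < 4, DifferentiableAt ℝ (deriv^[k] fun y => w (p.1, y)) p.2) ∧
      |deriv^[4] (fun x => w (x, p.2)) p.1| + |deriv^[4] (fun y => w (p.1, y)) p.2| ≤ M


lemma second_deriv_nonneg_of_localmin {f : ℝ → ℝ} {a l r : ℝ}
    (hd : ∀ x ∈ Ioo l r, DifferentiableAt ℝ f x)
    (hd2 : ∀ x ∈ Ioo l r, DifferentiableAt ℝ (deriv f) x)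
    (ha : a ∈ Ioo l r) (hmin : IsLocalMin f a) :
    0 ≤ deriv (deriv f) a := by
  by_contra hneg
  push_neg at hneg
  set g := deriv f with hg
  have hga : g a = 0 := hmin.deriv_eq_zero
  have hgd : HasDerivAt g (deriv g a) a := (hd2 a ha).hasDerivAt
  have hslope : Filter.Tendsto (slope g a) (nhdsWithin a {a}ᶜ) (nhds (deriv g a)) :=
    hasDerivAt_iff_tendsto_slope.1 hgd
  have hleft : Filter.Tendsto (slope g a) (nhdsWithin a (Iio a)) (nhds (deriv g a)) :=
    hslope.mono_left (nhdsWithin_mono a (fun x hx => ne_of_lt hx))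
  have h1 : ∀ᶠ x in nhdsWithin a (Iio a), slope g a x < 0 :=
    hleft.eventually_lt_const hneg
  have h2 : ∀ᶠ x in nhdsWithin a (Iio a), x ∈ Ioo l r :=
    Filter.eventually_iff_exists_mem.2 ⟨Ioo l r, nhdsWithin_le_nhds (isOpen_Ioo.mem_nhds ha),
      fun x hx => hx⟩
  have h3 : ∀ᶠ x in nhdsWithin a (Iio a), f a ≤ f x := hmin.filter_mono nhdsWithin_le_nhds
  have hall := (h1.and h2).and h3
  rw [Filter.eventually_iff, mem_nhdsLT_iff_exists_Ioo_subset] at hall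
  obtain ⟨b, hb, hsub⟩ := hall
  rw [mem_Iio] at hb
  set m := (b + a) / 2 with hm
  have hmba : m ∈ Ioo b a := ⟨by rw [hm]; linarith, by rw [hm]; linarith⟩
  have hIoosub : Ioo m a ⊆ Ioo b a := Ioo_subset_Ioo hmba.1.le le_rfl
  have hsubIcc : Icc m a ⊆ Ioo l r := by
    intro x hx
    rcases eq_or_lt_of_le hx.2 with h | h
    · rw [h]; exact ha
    · exact (hsub ⟨lt_of_lt_of_le hmba.1 hx.1, h⟩).1.2
  have hcont : ContinuousOn f (Icc m a) := fun x hx =>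
    (hd x (hsubIcc hx)).continuousAt.continuousWithinAt
  obtain ⟨c, hc, hceq⟩ := exists_hasDerivAt_eq_slope f g hmba.2 hcont
    (fun x hx => (hd x (hsubIcc ⟨hx.1.le, hx.2.le⟩)).hasDerivAt)
  have hslc : slope g a c < 0 := (hsub (hIoosub hc)).1.1
  have hca : c - a < 0 := by linarith [hc.2]
  have hgc : 0 < g c := by
    rw [slope_def_field, hga, sub_zero] at hslc
    rcases div_neg_iff.1 hslc with ⟨h1', _⟩ | ⟨_, h2'⟩
    · exact h1'
    · linarith
  have hfm : f a ≤ f m := (hsub hmba).2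
  rw [hceq] at hgc
  have hpos : 0 < a - m := by linarith [hmba.2]
  rcases div_pos_iff.1 hgc with ⟨h1', _⟩ | ⟨_, h2'⟩
  · linarith
  · linarith

lemma contDiffOn_two_facts {f : ℝ → ℝ} {s : Set ℝ} (hs : IsOpen s) (hf : ContDiffOn ℝ 2 f s) :
    (∀ x ∈ s, DifferentiableAt ℝ f x) ∧ (∀ x ∈ s, DifferentiableAt ℝ (deriv f) x) := by
  constructor
  · intro x hx
    exact (hf.differentiableOn two_ne_zero).differentiableAt (hs.mem_nhds hx)
  · intro x hx
    have h1 : ContDiffOn ℝ 1 (deriv f) s := by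
      have := hf.deriv_of_isOpen hs (m := 1) (by norm_num)
      exact this
    exact (h1.differentiableOn one_ne_zero).differentiableAt (hs.mem_nhds hx)

lemma slice_x_contDiffOn {u : ℝ × ℝ → ℝ} (h2 : ContDiffOn ℝ 2 u unitOSq) {c : ℝ}
    (hc : c ∈ Ioo (0:ℝ) 1) : ContDiffOn ℝ 2 (fun x => u (x, c)) (Ioo 0 1) := by
  exact h2.comp ((contDiff_id.prodMk contDiff_const).contDiffOn)
    (fun x hx => by exact ⟨hx, hc⟩)

lemma slice_y_contDiffOn {u : ℝ × ℝ → ℝ} (h2 : ContDiffOn ℝ 2 u unitOSq) {c : ℝ}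
    (hc : c ∈ Ioo (0:ℝ) 1) : ContDiffOn ℝ 2 (fun y => u (c, y)) (Ioo 0 1) := by
  exact h2.comp ((contDiff_const.prodMk contDiff_id).contDiffOn)
    (fun y hy => by exact ⟨hc, hy⟩)

lemma max_principle {u : ℝ × ℝ → ℝ} (hc : ContinuousOn u unitSq)
    (h2 : ContDiffOn ℝ 2 u unitOSq)
    (hin : ∀ p ∈ unitOSq, 0 ≤ -(pdx2 u p + pdy2 u p) + π ^ 2 * u p)
    (hbd : ∀ p ∈ unitSq, OnBdry p → 0 ≤ u p) :
    ∀ p ∈ unitSq, 0 ≤ u p := by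
  have hK : IsCompact unitSq := isCompact_Icc.prod isCompact_Icc
  have hne : unitSq.Nonempty := ⟨(0, 0), by constructor <;> exact ⟨le_rfl, zero_le_one⟩⟩
  obtain ⟨p0, hp0, hmin⟩ := hK.exists_isMinOn hne hc
  intro p hp
  refine le_trans ?_ (hmin hp)
  by_contra hneg
  push_neg at hneg
  have hnb : ¬ OnBdry p0 := fun h => absurd (hbd p0 hp0 h) (not_le.2 hneg)
  rw [OnBdry] at hnb
  push_neg at hnb
  obtain ⟨h1', h2', h3', h4'⟩ := hnb
  have hp01 : p0.1 ∈ Ioo (0:ℝ) 1 :=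
    ⟨lt_of_le_of_ne hp0.1.1 (Ne.symm h1'), lt_of_le_of_ne hp0.1.2 h2'⟩
  have hp02 : p0.2 ∈ Ioo (0:ℝ) 1 :=
    ⟨lt_of_le_of_ne hp0.2.1 (Ne.symm h3'), lt_of_le_of_ne hp0.2.2 h4'⟩
  have hp0o : p0 ∈ unitOSq := ⟨hp01, hp02⟩
  -- x slice
  have hx2 : 0 ≤ pdx2 u p0 := by
    have hcd := slice_x_contDiffOn h2 hp02
    obtain ⟨hdx, hdx2⟩ := contDiffOn_two_facts isOpen_Ioo hcd
    have hlm : IsLocalMin (fun x => u (x, p0.2)) p0.1 := by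
      filter_upwards [isOpen_Ioo.mem_nhds hp01] with x hx
      have hxs : (x, p0.2) ∈ unitSq := ⟨⟨hx.1.le, hx.2.le⟩, ⟨hp02.1.le, hp02.2.le⟩⟩
      have := hmin hxs
      simpa using this
    exact second_deriv_nonneg_of_localmin hdx hdx2 hp01 hlm
  have hy2 : 0 ≤ pdy2 u p0 := by
    have hcd := slice_y_contDiffOn h2 hp01
    obtain ⟨hdy, hdy2⟩ := contDiffOn_two_facts isOpen_Ioo hcd
    have hlm : IsLocalMin (fun y => u (p0.1, y)) p0.2 := by
      filter_upwards [isOpen_Ioo.mem_nhds hp02] with y hy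
      have hys : (p0.1, y) ∈ unitSq := ⟨⟨hp01.1.le, hp01.2.le⟩, ⟨hy.1.le, hy.2.le⟩⟩
      have := hmin hys
      simpa using this
    exact second_deriv_nonneg_of_localmin hdy hdy2 hp02 hlm
  have hpi : (0:ℝ) < π ^ 2 := by positivity
  have := hin p0 hp0o
  nlinarith

lemma deriv2_sub {f g : ℝ → ℝ} {a l r : ℝ} (ha : a ∈ Ioo l r)
    (hf : ∀ x ∈ Ioo l r, DifferentiableAt ℝ f x) (hf' : DifferentiableAt ℝ (deriv f) a)
    (hg : ∀ x ∈ Ioo l r, DifferentiableAt ℝ g x) (hg' : DifferentiableAt ℝ (deriv g) a) :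
    deriv (deriv (fun x => f x - g x)) a = deriv (deriv f) a - deriv (deriv g) a := by
  have h1 : deriv (fun x => f x - g x) =ᶠ[nhds a] fun x => deriv f x - deriv g x := by
    filter_upwards [isOpen_Ioo.mem_nhds ha] with x hx
    exact deriv_sub (hf x hx) (hg x hx)
  rw [h1.deriv_eq, deriv_fun_sub hf' hg']


/-- `F(1/2,1/2) - π² w(1/2,1/2) ≥ ‖F‖_∞ / cosh(π/2)`. -/
theorem tilde_F_lower_bound_at_centre (F w : ℝ × ℝ → ℝ)
    (hF : ContinuousOn F unitSq) (hFmax : F (1 / 2, 1 / 2) = supNorm F)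
    (hw : SolvesP5 F w) :
    supNorm F / Real.cosh (π / 2) ≤ F (1 / 2, 1 / 2) - π ^ 2 * w (1 / 2, 1 / 2) := by
  obtain ⟨hwc, hw2, hweq, hwbd⟩ := hw
  set M := supNorm F with hM
  have hK : IsCompact unitSq := isCompact_Icc.prod isCompact_Icc
  have hcsq : ((1:ℝ)/2, (1:ℝ)/2) ∈ unitSq := ⟨⟨by norm_num, by norm_num⟩, ⟨by norm_num, by norm_num⟩⟩
  have hbdd : BddAbove ((fun p => |F p|) '' unitSq) :=
    (hK.image_of_continuousOn hF.abs).bddAbove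
  have hle : ∀ p ∈ unitSq, |F p| ≤ M := fun p hp => le_csSup hbdd ⟨p, hp, rfl⟩
  have hM0 : 0 ≤ M := le_trans (abs_nonneg _) (hle _ hcsq)
  have hch : (0:ℝ) < Real.cosh (π / 2) := Real.cosh_pos _
  have hpi2 : (0:ℝ) < π ^ 2 := by positivity
  set A : ℝ := M / (π ^ 2 * Real.cosh (π / 2)) with hA
  have hA0 : 0 ≤ A := by positivity
  set ψ : ℝ × ℝ → ℝ := fun p => M / π ^ 2 - A * Real.cosh (π * (p.1 - 1 / 2)) with hψ
  -- derivatives of the x-slice of ψ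
  have hs1 : ∀ c x : ℝ, HasDerivAt (fun x => ψ (x, c)) (-(A * π * Real.sinh (π * (x - 1 / 2)))) x := by
    intro c x
    have hinner : HasDerivAt (fun x : ℝ => π * (x - 1 / 2)) π x := by
      exact (((hasDerivAt_id x).sub_const (1/2)).const_mul π).congr_deriv (mul_one π)
    have := (HasDerivAt.const_mul A hinner.cosh).const_sub (M / π ^ 2)
    exact this.congr_deriv (by ring)
  have hs1d : ∀ c : ℝ, deriv (fun x => ψ (x, c)) = fun x => -(A * π * Real.sinh (π * (x - 1 / 2))) := by
    intro c; funext x; exact (hs1 c x).deriv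
  have hs2 : ∀ x : ℝ, HasDerivAt (fun x : ℝ => -(A * π * Real.sinh (π * (x - 1 / 2))))
      (-(A * π ^ 2 * Real.cosh (π * (x - 1 / 2)))) x := by
    intro x
    have hinner : HasDerivAt (fun x : ℝ => π * (x - 1 / 2)) π x := by
      exact (((hasDerivAt_id x).sub_const (1/2)).const_mul π).congr_deriv (mul_one π)
    have := (HasDerivAt.const_mul (A * π) hinner.sinh).neg
    exact this.congr_deriv (by ring)
  have hpdx2ψ : ∀ p : ℝ × ℝ, pdx2 ψ p = -(A * π ^ 2 * Real.cosh (π * (p.1 - 1 / 2))) := by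
    intro p
    rw [pdx2, hs1d p.2]
    exact (hs2 p.1).deriv
  have hpdy2ψ : ∀ p : ℝ × ℝ, pdy2 ψ p = 0 := by
    intro p
    rw [pdy2]
    have : (fun y => ψ (p.1, y)) = fun _ => ψ (p.1, 0) := by funext y; rfl
    rw [this]
    simp
  have hψsmooth : ContDiff ℝ 2 ψ := by
    rw [hψ]
    apply ContDiff.sub contDiff_const
    exact contDiff_const.mul (Real.contDiff_cosh.comp (contDiff_const.mul (contDiff_fst.sub contDiff_const)))
  -- u = ψ - w
  set u : ℝ × ℝ → ℝ := fun p => ψ p - w p with hu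
  have hcontu : ContinuousOn u unitSq := (hψsmooth.continuous.continuousOn).sub hwc
  have hu2 : ContDiffOn ℝ 2 u unitOSq := (hψsmooth.contDiffOn).sub hw2
  have hψbd : ∀ p ∈ unitSq, 0 ≤ ψ p := by
    intro p hp
    have h1 : |π * (p.1 - 1 / 2)| ≤ |π / 2| := by
      rw [abs_mul, abs_of_pos Real.pi_pos, abs_of_pos (by positivity : (0:ℝ) < π / 2)]
      have : |p.1 - 1 / 2| ≤ 1 / 2 := abs_le.2 ⟨by linarith [hp.1.1], by linarith [hp.1.2]⟩
      calc π * |p.1 - 1/2| ≤ π * (1/2) := by nlinarith [Real.pi_pos]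
        _ = π / 2 := by ring
    have h2 : Real.cosh (π * (p.1 - 1 / 2)) ≤ Real.cosh (π / 2) := Real.cosh_le_cosh.2 h1
    have h3 : A * Real.cosh (π * (p.1 - 1 / 2)) ≤ A * Real.cosh (π / 2) := by nlinarith
    have h4 : A * Real.cosh (π / 2) = M / π ^ 2 := by
      rw [hA]; field_simp
    simp only [hψ]
    linarith [h3, h4.le]
  -- interior inequality
  have hin : ∀ p ∈ unitOSq, 0 ≤ -(pdx2 u p + pdy2 u p) + π ^ 2 * u p := by
    intro p hp
    have hp1 : p.1 ∈ Ioo (0:ℝ) 1 := hp.1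
    have hp2 : p.2 ∈ Ioo (0:ℝ) 1 := hp.2
    -- slice facts for w
    obtain ⟨hwx, hwx2⟩ := contDiffOn_two_facts isOpen_Ioo (slice_x_contDiffOn hw2 hp2)
    obtain ⟨hwy, hwy2⟩ := contDiffOn_two_facts isOpen_Ioo (slice_y_contDiffOn hw2 hp1)
    have hψx : ∀ x ∈ Ioo (0:ℝ) 1, DifferentiableAt ℝ (fun x => ψ (x, p.2)) x :=
      fun x _ => (hs1 p.2 x).differentiableAt
    have hψx2 : DifferentiableAt ℝ (deriv (fun x => ψ (x, p.2))) p.1 := by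
      rw [hs1d p.2]; exact (hs2 p.1).differentiableAt
    have hψy : ∀ y ∈ Ioo (0:ℝ) 1, DifferentiableAt ℝ (fun y => ψ (p.1, y)) y := by
      intro y _
      have : (fun y => ψ (p.1, y)) = fun _ => ψ (p.1, 0) := by funext y; rfl
      rw [this]; exact differentiableAt_const _
    have hψy2 : DifferentiableAt ℝ (deriv (fun y => ψ (p.1, y))) p.2 := by
      have : (fun y => ψ (p.1, y)) = fun _ => ψ (p.1, 0) := by funext y; rfl
      rw [this]; simp
    have hux2 : pdx2 u p = pdx2 ψ p - pdx2 w p := by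
      rw [pdx2, pdx2, pdx2]
      exact deriv2_sub hp1 hψx hψx2 hwx (hwx2 p.1 hp1)
    have huy2 : pdy2 u p = pdy2 ψ p - pdy2 w p := by
      rw [pdy2, pdy2, pdy2]
      exact deriv2_sub hp2 hψy hψy2 hwy (hwy2 p.2 hp2)
    have hFp : F p ≤ M := by
      have hps : p ∈ unitSq := ⟨⟨hp1.1.le, hp1.2.le⟩, ⟨hp2.1.le, hp2.2.le⟩⟩
      exact le_trans (le_abs_self _) (hle p hps)
    have hweqp := hweq p hp
    have hψeq : -(pdx2 ψ p + pdy2 ψ p) + π ^ 2 * ψ p = M := by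
      rw [hpdx2ψ p, hpdy2ψ p]
      simp only [hψ]
      have h4 : π ^ 2 * (A * Real.cosh (π * (p.1 - 1/2))) = π ^ 2 * A * Real.cosh (π * (p.1 - 1/2)) := by ring
      field_simp
      ring
    have : -(pdx2 u p + pdy2 u p) + π ^ 2 * u p = M - F p := by
      rw [hux2, huy2]
      simp only [hu]
      linarith [hψeq, hweqp]
    linarith
  have hbd : ∀ p ∈ unitSq, OnBdry p → 0 ≤ u p := by
    intro p hp hb
    have := hwbd p hp hb
    simp only [hu, this, sub_zero]
    exact hψbd p hp
  have hfinal := max_principle hcontu hu2 hin hbd _ hcsq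
  -- unpack
  have hψc : ψ (1/2, 1/2) = M / π ^ 2 - A := by
    simp only [hψ]
    norm_num
  have hwc2 : w (1/2, 1/2) ≤ M / π ^ 2 - A := by
    simp only [hu] at hfinal
    linarith [hψc ▸ hfinal]
  have hπ2A : π ^ 2 * A = M / Real.cosh (π / 2) := by
    rw [hA]; field_simp
  rw [hFmax]
  have h5 : π ^ 2 * w (1/2, 1/2) ≤ π ^ 2 * (M / π ^ 2 - A) := by nlinarith [hwc2, hpi2]
  have h6 : π ^ 2 * (M / π ^ 2) = M := by field_simp
  have h7 : π ^ 2 * (M / π ^ 2 - A) = M - M / Real.cosh (π / 2) := by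
    rw [mul_sub, h6, hπ2A]
  linarith
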